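/- Let Φ : B(0,1/2) ⊂ ℝ^d → ℝ be a convex C^{2k+5} function of finite type with Φ(0) = 0 and ∇Φ(0) = 0, satisfying along every ray through the origin the finite-type derivative conditions with constants m, M > 0 and integer k ≥ 2 (as in the one-dimensional lemma). Then there exist constants c, C > 0 depending only on k, m, M such that (c|x|)^k ≤ Φ(x) ≤ (C|x|)² for all x ∈ B(0,1/2). -/

import Mathlib

open Set Filter Topology


lemma iDW_eq_iD {n : ℕ} {f : ℝ → ℝ} {s : Set ℝ} (hs : UniqueDiffOn ℝ s)
    (hf : ContDiff ℝ (n : ℕ∞) f) {x : ℝ} (hx : x ∈ s) :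
    iteratedDerivWithin n f s x = iteratedDeriv n f x := by
  rw [iteratedDerivWithin_eq_iteratedFDerivWithin, iteratedDeriv_eq_iteratedFDeriv]
  congr 1
  have h := contDiff_iff_ftaylorSeries.mp hf
  exact ((h.hasFTaylorSeriesUpToOn s).eq_iteratedFDerivWithin_of_uniqueDiffOn le_rfl hs hx).symm

lemma polyLower (k : ℕ) : ∃ ck : ℝ, 0 < ck ∧ ∀ a : Fin (k+1) → ℝ,
    ∃ u ∈ Set.Icc (0:ℝ) 1, ck * (∑ j, |a j|) ≤ |∑ j, a j * u ^ (j:ℕ)| := by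
  classical
  set X := Set.Icc (0:ℝ) 1
  haveI : CompactSpace X := isCompact_iff_compactSpace.mp isCompact_Icc
  -- the evaluation linear map
  let T : (Fin (k+1) → ℝ) →ₗ[ℝ] C(X, ℝ) :=
    { toFun := fun a => ⟨fun u => ∑ j, a j * (u:ℝ) ^ (j:ℕ), by
        apply continuous_finset_sum
        intro j _
        exact continuous_const.mul ((continuous_subtype_val).pow _)⟩
      map_add' := by
        intro a b; ext u; simp [add_mul, Finset.sum_add_distrib]
      map_smul' := by
        intro c a; ext u; simp [Finset.mul_sum, mul_assoc] }
  have hTapp : ∀ a (u : X), (T a) u = ∑ j, a j * (u:ℝ) ^ (j:ℕ) := fun a u => rfl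
  have hinj : Function.Injective T := by
    rw [injective_iff_map_eq_zero]
    intro a ha
    have hz : ∀ u : ℝ, u ∈ X → ∑ j, a j * u ^ (j:ℕ) = 0 := by
      intro u hu
      have := congrArg (fun g : C(X,ℝ) => g ⟨u, hu⟩) ha
      simpa [hTapp] using this
    set p : Polynomial ℝ := ∑ j : Fin (k+1), Polynomial.C (a j) * Polynomial.X ^ (j:ℕ) with hp
    have hpz : p = 0 := by
      apply Polynomial.eq_zero_of_infinite_isRoot
      apply Set.Infinite.mono (s := X)
      · intro u hu
        simp only [Set.mem_setOf_eq, Polynomial.IsRoot, hp, Polynomial.eval_finset_sum,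
          Polynomial.eval_mul, Polynomial.eval_C, Polynomial.eval_pow, Polynomial.eval_X]
        exact hz u hu
      · exact Set.infinite_coe_iff.mp (Set.Icc.infinite zero_lt_one)
    funext i
    have : p.coeff (i:ℕ) = a i := by
      rw [hp, Polynomial.finset_sum_coeff]
      rw [Finset.sum_eq_single i]
      · simp
      · intro j _ hj
        rw [Polynomial.coeff_C_mul, Polynomial.coeff_X_pow]
        simp only [mul_ite, mul_one, mul_zero, ite_eq_right_iff]
        intro h
        exact absurd (Fin.val_injective h.symm) hj
      · simp
    rw [hpz] at this
    simpa using this.symm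
  -- inverse bound via finite-dimensionality
  obtain ⟨K, hK, hKT⟩ := (LinearMap.injective_iff_antilipschitz T).mp hinj
  set C₀ : ℝ := (K : ℝ) + 1 with hC₀
  have hC₀pos : 0 < C₀ := by positivity
  have hbound : ∀ a : Fin (k+1) → ℝ, ‖a‖ ≤ C₀ * ‖T a‖ := by
    intro a
    have h := hKT.le_mul_dist a 0
    simp only [dist_zero_right, map_zero] at h
    exact h.trans (mul_le_mul_of_nonneg_right (by simp [hC₀]) (norm_nonneg _))
  refine ⟨1 / (2 * (k+1) * C₀), by positivity, ?_⟩
  intro a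
  by_cases hA : (∑ j, |a j|) = 0
  · exact ⟨0, by simp [X], by simp [hA]⟩
  have hApos : 0 < ∑ j, |a j| := lt_of_le_of_ne (Finset.sum_nonneg fun j _ => abs_nonneg _) (Ne.symm hA)
  by_contra hcon
  push_neg at hcon
  have hnorm : ‖T a‖ ≤ (1 / (2 * (k+1) * C₀)) * (∑ j, |a j|) := by
    apply ContinuousMap.norm_le _ (by positivity) |>.mpr
    intro u
    rw [hTapp, Real.norm_eq_abs]
    exact le_of_lt (hcon u u.2)
  have hsum : (∑ j, |a j|) ≤ (k+1) * ‖a‖ := by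
    calc (∑ j, |a j|) ≤ ∑ _j : Fin (k+1), ‖a‖ := by
          apply Finset.sum_le_sum
          intro j _
          exact (Real.norm_eq_abs (a j)) ▸ norm_le_pi_norm a j
    _ = (k+1) * ‖a‖ := by simp [mul_comm]
  have : (∑ j, |a j|) ≤ (k+1) * (C₀ * ((1 / (2 * (k+1) * C₀)) * (∑ j, |a j|))) := by
    refine hsum.trans ?_
    have := (hbound a).trans (mul_le_mul_of_nonneg_left hnorm (le_of_lt hC₀pos))
    nlinarith [this]
  have hk1 : (0:ℝ) < (k+1) := by positivity
  have : (∑ j, |a j|) ≤ (∑ j, |a j|) / 2 := by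
    have hEq : (k+1 : ℝ) * (C₀ * ((1 / (2 * (k+1) * C₀)) * (∑ j, |a j|))) = (∑ j, |a j|) / 2 := by
      field_simp
    linarith [hEq ▸ this]
  linarith

lemma convex_aux {f : ℝ → ℝ} (hc : ConvexOn ℝ (Set.Ioo (-1:ℝ) 1) f)
    (h0 : f 0 = 0) (hdiff : HasDerivAt f 0 0) :
    ∀ s ∈ Set.Ico (0:ℝ) 1, (0 ≤ f s ∧ ∀ t ∈ Set.Ico (0:ℝ) 1, s ≤ t → f s ≤ f t) := by
  have h01 : (0:ℝ) ∈ Set.Ioo (-1:ℝ) 1 := by norm_num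
  have key : ∀ s ∈ Set.Ioo (0:ℝ) 1, ∀ t ∈ Set.Icc (0:ℝ) s, f t ≤ (t/s) * f s := by
    intro s hs t ht
    have hsmem : s ∈ Set.Ioo (-1:ℝ) 1 := ⟨by linarith [hs.1], hs.2⟩
    have hb : 0 ≤ t / s := div_nonneg ht.1 (le_of_lt hs.1)
    have hab : (1 - t/s) + t/s = 1 := by ring
    have ha : 0 ≤ 1 - t/s := by
      have : t / s ≤ 1 := (div_le_one hs.1).mpr ht.2
      linarith
    have := hc.2 h01 hsmem ha hb hab
    simpa [h0, smul_eq_mul, div_mul_cancel₀ t (ne_of_gt hs.1)] using this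
  have nonneg : ∀ s ∈ Set.Ico (0:ℝ) 1, 0 ≤ f s := by
    intro s hs
    rcases eq_or_lt_of_le hs.1 with h | h
    · rw [← h, h0]
    have hs' : s ∈ Set.Ioo (0:ℝ) 1 := ⟨h, hs.2⟩
    have htend : Tendsto (slope f 0) (𝓝[>] (0:ℝ)) (𝓝 0) := by
      have := hasDerivAt_iff_tendsto_slope.mp hdiff
      exact this.mono_left (nhdsWithin_mono _ (fun x hx => ne_of_gt hx))
    have hev : ∀ᶠ t in 𝓝[>] (0:ℝ), slope f 0 t ≤ f s / s := by
      have hmem : Set.Ioo (0:ℝ) s ∈ 𝓝[>] (0:ℝ) := Ioo_mem_nhdsGT_of_mem ⟨le_refl 0, h⟩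
      filter_upwards [hmem]
      intro t ht
      have h1 : f t ≤ (t/s) * f s := key s hs' t ⟨le_of_lt ht.1, le_of_lt ht.2⟩
      rw [slope_def_field]
      simp only [h0, sub_zero]
      rw [div_le_div_iff₀ ht.1 h]
      have h2 := mul_le_mul_of_nonneg_right h1 (le_of_lt h)
      calc f t * s ≤ ((t/s) * f s) * s := by
            simpa [sub_zero] using h2
      _ = f s * t := by field_simp
    have h2 : 0 ≤ f s / s := le_of_tendsto htend hev
    calc (0:ℝ) ≤ (f s / s) * s := mul_nonneg h2 (le_of_lt h)
    _ = f s := div_mul_cancel₀ _ (ne_of_gt h)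
  intro s hs
  refine ⟨nonneg s hs, ?_⟩
  intro t ht hst
  rcases eq_or_lt_of_le hst with rfl | h
  · exact le_rfl
  have ht0 : 0 < t := lt_of_le_of_lt hs.1 h
  have h1 := key t ⟨ht0, ht.2⟩ s ⟨hs.1, le_of_lt h⟩
  calc f s ≤ (s/t) * f t := h1
  _ ≤ 1 * f t := mul_le_mul_of_nonneg_right ((div_le_one ht0).mpr (le_of_lt h)) (nonneg t ht)
  _ = f t := one_mul _

lemma oneDimLower (k : ℕ) (hk : 2 ≤ k) (m M : ℝ) (hm : 0 < m) (hM : 0 < M) :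
    ∃ c₂ : ℝ, 0 < c₂ ∧ ∀ f : ℝ → ℝ,
      ContDiff ℝ ((k+1 : ℕ) : ℕ∞) f →
      f 0 = 0 → HasDerivAt f 0 0 →
      ConvexOn ℝ (Set.Ioo (-1:ℝ) 1) f →
      (m ≤ ∑ j ∈ Finset.Icc 2 k, |iteratedDeriv j f 0| / (Nat.factorial j)) →
      (∀ r ∈ Set.Icc (0:ℝ) 1, |iteratedDeriv (k+1) f r| ≤ M) →
      ∀ s ∈ Set.Ico (0:ℝ) 1, c₂ * s ^ k ≤ f s := by
  obtain ⟨ck, hck, hA⟩ := polyLower k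
  set δ : ℝ := min (1/2) (ck * m / (2 * M)) with hδdef
  have hδpos : 0 < δ := lt_min (by norm_num) (by positivity)
  have hδle : δ ≤ 1/2 := min_le_left _ _
  have hδle2 : δ ≤ ck * m / (2 * M) := min_le_right _ _
  set c₁ : ℝ := ck * m / 2 with hc₁def
  have hc₁pos : 0 < c₁ := by positivity
  refine ⟨c₁ * δ ^ k, by positivity, ?_⟩
  intro f hf h0 hd hconv hsum hbd
  have haux := convex_aux hconv h0 hd
  -- the claim for small s
  have hclaim : ∀ s : ℝ, 0 < s → s ≤ δ → c₁ * s ^ k ≤ f s := by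
    intro s hs0 hsδ
    have hs1 : s < 1 := lt_of_le_of_lt (hsδ.trans hδle) (by norm_num)
    have hsI : s ∈ Set.Ico (0:ℝ) 1 := ⟨le_of_lt hs0, hs1⟩
    set A : ℕ → ℝ := fun j => iteratedDeriv j f 0 / (Nat.factorial j) with hAdef
    set P : ℝ → ℝ := fun t => ∑ i ∈ Finset.range (k+1), A i * t ^ i with hPdef
    -- Taylor bound
    have hTay : ∀ t ∈ Set.Icc (0:ℝ) s, |f t - P t| ≤ M * s ^ (k+1) := by
      intro t ht
      have hud : UniqueDiffOn ℝ (Set.Icc (0:ℝ) s) := uniqueDiffOn_Icc hs0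
      have hsub : Set.Icc (0:ℝ) s ⊆ Set.Icc (0:ℝ) 1 :=
        Set.Icc_subset_Icc le_rfl (le_of_lt hs1)
      have hbd' : ∀ y ∈ Set.Icc (0:ℝ) s,
          ‖iteratedDerivWithin (k+1) f (Set.Icc (0:ℝ) s) y‖ ≤ M := by
        intro y hy
        rw [iDW_eq_iD hud hf hy, Real.norm_eq_abs]
        exact hbd y (hsub hy)
      have h1 := taylor_mean_remainder_bound (le_of_lt hs0) (hf.contDiffOn) ht hbd'
      have h2 : taylorWithinEval f k (Set.Icc (0:ℝ) s) 0 t = P t := by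
        rw [taylor_within_apply, hPdef]
        apply Finset.sum_congr rfl
        intro i hi
        simp only [Finset.mem_range] at hi
        have hf' : ContDiff ℝ (i : ℕ∞) f := hf.of_le (by exact_mod_cast (show i ≤ k+1 by omega))
        rw [iDW_eq_iD hud hf' (Set.left_mem_Icc.mpr (le_of_lt hs0))]
        simp only [smul_eq_mul, hAdef, sub_zero]
        field_simp
      rw [h2, Real.norm_eq_abs] at h1
      calc |f t - P t| ≤ M * (t - 0) ^ (k+1) / (Nat.factorial k) := h1
      _ ≤ M * s ^ (k+1) := by
          rw [div_le_iff₀ (by positivity : (0:ℝ) < (Nat.factorial k : ℝ))]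
          have h3 : (t - 0) ^ (k+1) ≤ s ^ (k+1) :=
            pow_le_pow_left₀ (by simpa using ht.1) (by simpa using ht.2) _
          have h4 : (1:ℝ) ≤ (Nat.factorial k : ℝ) := by
            exact_mod_cast Nat.one_le_iff_ne_zero.mpr (Nat.factorial_ne_zero k)
          have h3' := mul_le_mul_of_nonneg_left h3 hM.le
          have h5 : (0:ℝ) ≤ M * s ^ (k+1) := by positivity
          nlinarith [h3', mul_nonneg h5 (sub_nonneg.mpr h4)]
    -- lower bound on |P| at some point
    obtain ⟨u, huI, hu⟩ := hA (fun j : Fin (k+1) => A j * s ^ (j:ℕ))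
    have hPsu : (∑ j : Fin (k+1), (A j * s ^ (j:ℕ)) * u ^ (j:ℕ)) = P (s * u) := by
      have hP2 : P (s*u) = ∑ i ∈ Finset.range (k+1), A i * (s*u) ^ i := rfl
      rw [hP2, ← Fin.sum_univ_eq_sum_range (fun i => A i * (s*u) ^ i)]
      exact Finset.sum_congr rfl (fun j _ => by rw [mul_pow]; ring)
    have hsumlow : m * s ^ k ≤ ∑ j : Fin (k+1), |A j * s ^ (j:ℕ)| := by
      have e1 : (∑ j : Fin (k+1), |A j * s ^ (j:ℕ)|)
          = ∑ i ∈ Finset.range (k+1), |A i| * s ^ i := by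
        rw [← Fin.sum_univ_eq_sum_range (fun i => |A i| * s ^ i)]
        apply Finset.sum_congr rfl
        intro j _
        rw [abs_mul, abs_pow, abs_of_nonneg (le_of_lt hs0)]
      rw [e1]
      have hsub : Finset.Icc 2 k ⊆ Finset.range (k+1) := by
        intro i hi
        simp only [Finset.mem_Icc] at hi
        simp only [Finset.mem_range]
        omega
      have e2 : ∑ i ∈ Finset.Icc 2 k, |A i| * s ^ i ≤ ∑ i ∈ Finset.range (k+1), |A i| * s ^ i :=
        Finset.sum_le_sum_of_subset_of_nonneg hsub (fun i _ _ => by positivity)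
      refine le_trans ?_ e2
      have e3 : ∀ i ∈ Finset.Icc 2 k, |A i| * s ^ k ≤ |A i| * s ^ i := by
        intro i hi
        simp only [Finset.mem_Icc] at hi
        exact mul_le_mul_of_nonneg_left
          (pow_le_pow_of_le_one (le_of_lt hs0) (le_of_lt hs1) hi.2) (abs_nonneg _)
      calc m * s ^ k ≤ (∑ i ∈ Finset.Icc 2 k, |A i|) * s ^ k := by
            apply mul_le_mul_of_nonneg_right _ (pow_nonneg (le_of_lt hs0) k)
            refine le_trans hsum (le_of_eq ?_)
            apply Finset.sum_congr rfl
            intro i _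
            rw [hAdef, abs_div, abs_of_nonneg (by positivity : (0:ℝ) ≤ (Nat.factorial i : ℝ))]
      _ = ∑ i ∈ Finset.Icc 2 k, |A i| * s ^ k := by rw [Finset.sum_mul]
      _ ≤ ∑ i ∈ Finset.Icc 2 k, |A i| * s ^ i := Finset.sum_le_sum e3
    have hPlow : ck * m * s ^ k ≤ |P (s * u)| := by
      rw [← hPsu]
      refine le_trans ?_ hu
      have := mul_le_mul_of_nonneg_left hsumlow (le_of_lt hck)
      linarith [this]
    -- t := s*u
    set t : ℝ := s * u with htdef
    have ht0 : 0 ≤ t := mul_nonneg (le_of_lt hs0) huI.1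
    have hts : t ≤ s := by
      calc t = s * u := rfl
      _ ≤ s * 1 := mul_le_mul_of_nonneg_left huI.2 (le_of_lt hs0)
      _ = s := mul_one s
    have htI : t ∈ Set.Ico (0:ℝ) 1 := ⟨ht0, lt_of_le_of_lt hts hs1⟩
    have hft0 : 0 ≤ f t := (haux t htI).1
    have hfts : f t ≤ f s := (haux t htI).2 s hsI hts
    have hTayt := hTay t ⟨ht0, hts⟩
    -- s small : M * s ≤ ck * m / 2
    have hsmall : M * s ≤ ck * m / 2 := by
      have := mul_le_mul_of_nonneg_left (hsδ.trans hδle2) (le_of_lt hM)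
      calc M * s ≤ M * (ck * m / (2 * M)) := mul_le_mul_of_nonneg_left (hsδ.trans hδle2) (le_of_lt hM)
      _ = ck * m / 2 := by field_simp
    have hspow : 0 ≤ s ^ k := pow_nonneg (le_of_lt hs0) k
    have hMs : M * s ^ (k+1) ≤ (ck * m / 2) * s ^ k := by
      calc M * s ^ (k+1) = (M * s) * s ^ k := by ring
      _ ≤ (ck * m / 2) * s ^ k := mul_le_mul_of_nonneg_right hsmall hspow
    -- case analysis
    rcases le_or_gt 0 (P t) with hP | hP
    · -- P t ≥ ck m s^k
      have h5 : ck * m * s ^ k ≤ P t := by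
        rwa [abs_of_nonneg hP] at hPlow
      have h6 : P t - M * s ^ (k+1) ≤ f t := by
        have := abs_sub_le_iff.mp hTayt
        linarith [this.2]
      calc c₁ * s ^ k = ck * m * s ^ k - (ck * m / 2) * s ^ k := by rw [hc₁def]; ring
      _ ≤ P t - M * s ^ (k+1) := by linarith
      _ ≤ f t := h6
      _ ≤ f s := hfts
    · -- contradiction
      exfalso
      have h5 : P t ≤ -(ck * m * s ^ k) := by
        rw [abs_of_neg hP] at hPlow
        linarith
      have h6 : f t - M * s ^ (k+1) ≤ P t := by
        have := abs_sub_le_iff.mp hTayt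
        linarith [this.1]
      have h7 : 0 < ck * m * s ^ k := by positivity
      nlinarith
  -- conclude
  intro s hs
  rcases eq_or_lt_of_le hs.1 with h | h
  · rw [← h, h0]
    have hz : (0:ℝ)^k = 0 := zero_pow (by omega)
    rw [hz, mul_zero]
  have hδI : δ ∈ Set.Ico (0:ℝ) 1 := ⟨le_of_lt hδpos, lt_of_le_of_lt hδle (by norm_num)⟩
  rcases le_or_gt s δ with hsδ | hsδ
  · have h1 := hclaim s h hsδ
    have h2 : c₁ * δ ^ k * s ^ k ≤ c₁ * s ^ k := by
      have hδ1 : δ ^ k ≤ 1 := pow_le_one₀ (le_of_lt hδpos) (by linarith)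
      nlinarith [mul_nonneg (mul_nonneg hc₁pos.le (sub_nonneg.mpr hδ1)) (pow_nonneg h.le k)]
    linarith
  · have h1 := hclaim δ hδpos le_rfl
    have h2 : f δ ≤ f s := (haux δ hδI).2 s hs (le_of_lt hsδ)
    have h3 : s ^ k ≤ 1 := pow_le_one₀ hs.1 (le_of_lt hs.2)
    have h4 : 0 < δ ^ k := pow_pos hδpos k
    have h5 : c₁ * δ ^ k * s ^ k ≤ c₁ * δ ^ k * 1 :=
      mul_le_mul_of_nonneg_left h3 (mul_nonneg hc₁pos.le h4.le)
    linarith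

lemma oneDimUpper (M : ℝ) (hM : 0 < M) {f : ℝ → ℝ}
    (hf : ContDiff ℝ (2 : ℕ∞) f) (h0 : f 0 = 0) (hd : deriv f 0 = 0)
    (hbd : ∀ r ∈ Set.Icc (0:ℝ) 1, |iteratedDeriv 2 f r| ≤ M) :
    ∀ s ∈ Set.Ioc (0:ℝ) 1, f s ≤ M * s ^ 2 := by
  intro s hs
  have hs0 : 0 < s := hs.1
  have hud : UniqueDiffOn ℝ (Set.Icc (0:ℝ) s) := uniqueDiffOn_Icc hs0
  have hsub : Set.Icc (0:ℝ) s ⊆ Set.Icc (0:ℝ) 1 := Set.Icc_subset_Icc le_rfl hs.2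
  have hbd' : ∀ y ∈ Set.Icc (0:ℝ) s, ‖iteratedDerivWithin (1+1) f (Set.Icc (0:ℝ) s) y‖ ≤ M := by
    intro y hy
    rw [iDW_eq_iD hud (by exact_mod_cast hf) hy, Real.norm_eq_abs]
    exact hbd y (hsub hy)
  have h1 := taylor_mean_remainder_bound (n := 1) (le_of_lt hs0)
    (by exact_mod_cast hf.contDiffOn) (Set.right_mem_Icc.mpr (le_of_lt hs0)) hbd'
  have h2 : taylorWithinEval f 1 (Set.Icc (0:ℝ) s) 0 s = 0 := by
    rw [taylor_within_apply]
    have e0 : iteratedDerivWithin 0 f (Set.Icc (0:ℝ) s) 0 = 0 := by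
      rw [iDW_eq_iD hud (hf.of_le (by norm_num)) (Set.left_mem_Icc.mpr (le_of_lt hs0))]
      simpa using h0
    have e1 : iteratedDerivWithin 1 f (Set.Icc (0:ℝ) s) 0 = 0 := by
      rw [iDW_eq_iD hud (hf.of_le (by norm_num)) (Set.left_mem_Icc.mpr (le_of_lt hs0))]
      rw [iteratedDeriv_one]
      exact hd
    rw [Finset.sum_range_succ, Finset.sum_range_one, e0, e1]
    simp
  rw [h2, sub_zero, Real.norm_eq_abs] at h1
  have h3 : |f s| ≤ M * s ^ 2 := by
    calc |f s| ≤ M * (s - 0) ^ (1+1) / (Nat.factorial 1) := h1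
    _ = M * s ^ 2 := by norm_num
  linarith [abs_le.mp h3]

theorem stmt_4 (d k : ℕ) (hk : 2 ≤ k) (m M : ℝ) (hm : 0 < m) (hM : 0 < M) :
    ∃ c C : ℝ, 0 < c ∧ 0 < C ∧
      ∀ Φ : EuclideanSpace ℝ (Fin d) → ℝ,
        ContDiff ℝ (2 * k + 5 : ℕ) Φ →
        ConvexOn ℝ (Metric.ball 0 (1/2)) Φ →
        Φ 0 = 0 → gradient Φ 0 = 0 →
        (∀ θ : EuclideanSpace ℝ (Fin d), ‖θ‖ = 1 →
          ∀ r ∈ Set.Icc (0 : ℝ) 1,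
            m ≤ ∑ j ∈ Finset.Icc 2 k,
                |iteratedDeriv j (fun s : ℝ => Φ ((s / 2) • θ)) r| / (Nat.factorial j) ∧
            ∀ j ≤ 2 * k + 5, |iteratedDeriv j (fun s : ℝ => Φ ((s / 2) • θ)) r| ≤ M) →
        ∀ x ∈ Metric.ball (0 : EuclideanSpace ℝ (Fin d)) (1/2),
          (c * ‖x‖) ^ k ≤ Φ x ∧ Φ x ≤ (C * ‖x‖) ^ 2 := by
  obtain ⟨c₂, hc₂, hlow⟩ := oneDimLower k hk m M hm hM
  refine ⟨2 * min c₂ 1, 2 * Real.sqrt M, by positivity, by positivity, ?_⟩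
  intro Φ hΦ hconv hΦ0 hgrad hhyp x hx
  rcases eq_or_ne x 0 with rfl | hx0
  · constructor
    · rw [hΦ0, norm_zero, mul_zero]
      rw [zero_pow (by omega : k ≠ 0)]
    · rw [hΦ0, norm_zero, mul_zero]
      positivity
  -- setup
  set θ : EuclideanSpace ℝ (Fin d) := ‖x‖⁻¹ • x with hθdef
  have hxn : 0 < ‖x‖ := norm_pos_iff.mpr hx0
  have hθ : ‖θ‖ = 1 := by
    rw [hθdef, norm_smul, norm_inv, norm_norm, inv_mul_cancel₀ (ne_of_gt hxn)]
  set f : ℝ → ℝ := fun s : ℝ => Φ ((s / 2) • θ) with hfdef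
  have hyp := hhyp θ hθ
  -- smoothness
  have hg : ContDiff ℝ ((2*k+5 : ℕ) : ℕ∞) (fun s : ℝ => (s / 2) • θ) :=
    (contDiff_id.div_const 2).smul contDiff_const
  have hfC : ContDiff ℝ ((2*k+5 : ℕ) : ℕ∞) f := hΦ.comp hg
  -- values
  have hf0 : f 0 = 0 := by
    rw [hfdef]; simp [hΦ0]
  have hfderiv : fderiv ℝ Φ 0 = 0 := by
    have h := congrArg (InnerProductSpace.toDual ℝ (EuclideanSpace ℝ (Fin d))) hgrad
    rw [gradient] at h
    simpa using h
  have hdf : HasDerivAt f 0 0 := by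
    have hgd : HasDerivAt (fun s : ℝ => (s / 2) • θ) ((1/2 : ℝ) • θ) 0 := by
      have h1 : HasDerivAt (fun s : ℝ => s / 2) (1/2 : ℝ) 0 := by
        simpa using (hasDerivAt_id (0:ℝ)).div_const 2
      exact h1.smul_const θ
    have hΦd : DifferentiableAt ℝ Φ ((0 / 2 : ℝ) • θ) := by
      have : ((0/2 : ℝ) • θ) = 0 := by norm_num
      rw [this]
      exact (hΦ.differentiable (by simp)).differentiableAt
    have h2 := (hΦd.hasFDerivAt.comp_hasDerivAt 0 hgd)
    have h3 : ((0/2 : ℝ) • θ) = 0 := by norm_num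
    rw [h3, hfderiv] at h2
    simp at h2
    exact h2
  -- convexity of f on Ioo (-1) 1
  have hfconv : ConvexOn ℝ (Set.Ioo (-1:ℝ) 1) f := by
    refine ⟨convex_Ioo _ _, ?_⟩
    intro p hp q hq a b ha hb hab
    have hmem : ∀ r : ℝ, r ∈ Set.Ioo (-1:ℝ) 1 → ((r / 2) • θ) ∈ Metric.ball (0 : EuclideanSpace ℝ (Fin d)) (1/2) := by
      intro r hr
      rw [mem_ball_zero_iff, norm_smul, hθ, mul_one, Real.norm_eq_abs, abs_div]
      rw [abs_of_pos (by norm_num : (0:ℝ) < 2)]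
      have : |r| < 1 := abs_lt.mpr ⟨hr.1, hr.2⟩
      linarith
    have hkey : (((a • p + b • q) / 2) • θ) = a • ((p/2) • θ) + b • ((q/2) • θ) := by
      have he : (a • p + b • q) / 2 = a * (p/2) + b * (q/2) := by
        simp only [smul_eq_mul]; ring
      rw [he, add_smul, mul_smul, mul_smul]
    have := hconv.2 (hmem p hp) (hmem q hq) ha hb hab
    calc f (a • p + b • q) = Φ (a • ((p/2) • θ) + b • ((q/2) • θ)) := congrArg Φ hkey
    _ ≤ a • Φ ((p/2) • θ) + b • Φ ((q/2) • θ) := this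
    _ = a • f p + b • f q := rfl
  -- sum condition and derivative bounds
  have hsum0 : m ≤ ∑ j ∈ Finset.Icc 2 k, |iteratedDeriv j f 0| / (Nat.factorial j) :=
    (hyp 0 ⟨le_rfl, zero_le_one⟩).1
  have hbdk : ∀ r ∈ Set.Icc (0:ℝ) 1, |iteratedDeriv (k+1) f r| ≤ M :=
    fun r hr => (hyp r hr).2 (k+1) (by omega)
  have hbd2 : ∀ r ∈ Set.Icc (0:ℝ) 1, |iteratedDeriv 2 f r| ≤ M :=
    fun r hr => (hyp r hr).2 2 (by omega)
  -- apply 1-d lemmas at s = 2‖x‖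
  set s : ℝ := 2 * ‖x‖ with hsdef
  have hs0 : 0 < s := by positivity
  have hs1 : s < 1 := by
    rw [Metric.mem_ball, dist_zero_right] at hx
    rw [hsdef]; linarith
  have hfs : f s = Φ x := by
    rw [hfdef]
    simp only
    congr 1
    rw [hθdef, smul_smul, hsdef]
    rw [show (2 * ‖x‖ / 2) * ‖x‖⁻¹ = ‖x‖ * ‖x‖⁻¹ by ring, mul_inv_cancel₀ (ne_of_gt hxn), one_smul]
  constructor
  · -- lower bound
    have h1 := hlow f (hfC.of_le (by exact_mod_cast (by omega : k+1 ≤ 2*k+5)))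
      hf0 hdf hfconv hsum0 hbdk s ⟨le_of_lt hs0, hs1⟩
    rw [hfs] at h1
    refine le_trans ?_ h1
    have e1 : (2 * min c₂ 1 * ‖x‖) = (min c₂ 1) * s := by rw [hsdef]; ring
    rw [e1, mul_pow]
    apply mul_le_mul_of_nonneg_right _ (pow_nonneg (le_of_lt hs0) k)
    have hmle : min c₂ 1 ≤ 1 := min_le_right _ _
    have hmpos : 0 ≤ min c₂ 1 := le_min (le_of_lt hc₂) zero_le_one
    calc (min c₂ 1) ^ k ≤ min c₂ 1 := pow_le_of_le_one hmpos hmle (by omega)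
    _ ≤ c₂ := min_le_left _ _
  · -- upper bound
    have h1 := oneDimUpper M hM (hfC.of_le (by exact_mod_cast (by omega : 2 ≤ 2*k+5)))
      hf0 hdf.deriv hbd2 s ⟨hs0, le_of_lt hs1⟩
    rw [hfs] at h1
    refine le_trans h1 (le_of_eq ?_)
    rw [hsdef]
    rw [mul_pow, mul_pow]
    rw [mul_pow]
    rw [Real.sq_sqrt (le_of_lt hM)]
    ring
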